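/- Equality case of Jensen: with T a probability measure on a compact convex K ⊂ ℝⁿ with barycentre x and f continuous convex on K, if f(x) = ∫ f dT then f is affine on the convex hull of the support of T. -/

import Mathlib

open MeasureTheory

/-- The (topological) support of a measure: points all of whose neighbourhoods
have positive measure. -/
def measureSupport {α : Type*} [TopologicalSpace α] [MeasurableSpace α]
    (T : Measure α) : Set α :=
  {x | ∀ U ∈ nhds x, 0 < T U}

open Finset Metric Set


/-- Key algebraic lemma: if a convex function attains equality in Jensen's inequality
at a strictly positive combination, then it attains equality for any combination
supported on the same points. -/
lemma key_affine {E : Type*} [AddCommGroup E] [Module ℝ E] {K : Set E} {f : E → ℝ}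
    (hf : ConvexOn ℝ K f) {ι : Type*} [Fintype ι]
    {y : ι → E} (hy : ∀ i, y i ∈ K)
    {α : ι → ℝ} (hα : ∀ i, 0 ≤ α i) (hαs : ∑ i, α i = 1)
    (heq : f (∑ i, α i • y i) = ∑ i, α i * f (y i))
    {β : ι → ℝ} (hβ : ∀ i, 0 ≤ β i) (hβs : ∑ i, β i = 1)
    (hβα : ∀ i, α i = 0 → β i = 0) :
    f (∑ i, β i • y i) = ∑ i, β i * f (y i) := by
  have hne : (Finset.univ : Finset ι).Nonempty := by
    have : Nonempty ι := by
      by_contra h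
      rw [not_nonempty_iff] at h
      rw [Finset.univ_eq_empty, Finset.sum_empty] at hαs
      norm_num at hαs
    exact Finset.univ_nonempty
  -- choose μ
  set m : ℝ := Finset.univ.inf' hne (fun i => if α i = 0 then 1 else α i) with hm
  have hmpos : 0 < m := by
    rw [hm, Finset.lt_inf'_iff]
    intro i _
    split_ifs with h
    · norm_num
    · exact lt_of_le_of_ne (hα i) (Ne.symm h)
  obtain ⟨i0, -, hi0⟩ : ∃ i ∈ Finset.univ, 0 < α i := by
    by_contra h
    push_neg at h
    have : ∑ i, α i = 0 := Finset.sum_eq_zero fun i hi =>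
      le_antisymm (h i hi) (hα i)
    rw [this] at hαs; norm_num at hαs
  have hm1 : m ≤ 1 := by
    have h1 : (if α i0 = 0 then 1 else α i0) ≤ 1 := by
      split_ifs with h
      · exact le_rfl
      · exact le_trans (Finset.single_le_sum (fun i _ => hα i) (Finset.mem_univ i0)) hαs.le
    exact (Finset.inf'_le _ (Finset.mem_univ i0)).trans h1
  set μ : ℝ := m / 2 with hμ
  have hμpos : 0 < μ := by positivity
  have hμlt : μ < 1 := by rw [hμ]; linarith
  have hβ1 : ∀ i, β i ≤ 1 := fun i =>
    (Finset.single_le_sum (fun j _ => hβ j) (Finset.mem_univ i)).trans hβs.le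
  have hμβ : ∀ i, μ * β i ≤ α i := by
    intro i
    by_cases h : α i = 0
    · simp [hβα i h, h]
    · have hαi : 0 < α i := lt_of_le_of_ne (hα i) (Ne.symm h)
      have hmi : m ≤ α i := by
        calc m ≤ (if α i = 0 then 1 else α i) := Finset.inf'_le _ (Finset.mem_univ i)
        _ = α i := by rw [if_neg h]
      nlinarith [hβ i, hβ1 i]
  set γ : ι → ℝ := fun i => (α i - μ * β i) / (1 - μ) with hγ
  have h1μ : 0 < 1 - μ := by linarith
  have hγ0 : ∀ i, 0 ≤ γ i := fun i => div_nonneg (by linarith [hμβ i]) h1μ.le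
  have hγs : ∑ i, γ i = 1 := by
    rw [hγ]
    rw [← Finset.sum_div]
    rw [div_eq_one_iff_eq h1μ.ne']
    rw [Finset.sum_sub_distrib, hαs, ← Finset.mul_sum, hβs]
    ring
  set w : E := ∑ i, β i • y i with hw
  set w' : E := ∑ i, γ i • y i with hw'
  have hwK : w ∈ K := hf.1.sum_mem (fun i _ => hβ i) hβs (fun i _ => hy i)
  have hw'K : w' ∈ K := hf.1.sum_mem (fun i _ => hγ0 i) hγs (fun i _ => hy i)
  have hz : μ • w + (1 - μ) • w' = ∑ i, α i • y i := by
    rw [hw, hw', Finset.smul_sum, Finset.smul_sum, ← Finset.sum_add_distrib]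
    refine Finset.sum_congr rfl fun i _ => ?_
    rw [smul_smul, smul_smul, ← add_smul]
    congr 1
    have hγi : (1 - μ) * γ i = α i - μ * β i := by
      simp only [hγ]
      field_simp
    linarith [hγi]
  have hJw : f w ≤ ∑ i, β i * f (y i) :=
    hf.map_sum_le (fun i _ => hβ i) hβs (fun i _ => hy i)
  have hJw' : f w' ≤ ∑ i, γ i * f (y i) :=
    hf.map_sum_le (fun i _ => hγ0 i) hγs (fun i _ => hy i)
  have hconv : f (μ • w + (1 - μ) • w') ≤ μ * f w + (1 - μ) * f w' :=
    hf.2 hwK hw'K hμpos.le h1μ.le (by ring)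
  have hsum : μ * (∑ i, β i * f (y i)) + (1 - μ) * (∑ i, γ i * f (y i))
      = ∑ i, α i * f (y i) := by
    rw [Finset.mul_sum, Finset.mul_sum, ← Finset.sum_add_distrib]
    refine Finset.sum_congr rfl fun i _ => ?_
    rw [hγ]
    field_simp
    ring
  have hfz : ∑ i, α i * f (y i) ≤ μ * f w + (1 - μ) * f w' := by
    rw [← heq, ← hz]; exact hconv
  have hge : ∑ i, β i * f (y i) ≤ f w := by
    nlinarith [hJw' , hfz, hsum]
  exact le_antisymm hJw hge

lemma sum_option' {ι M : Type*} [Fintype ι] [AddCommMonoid M] (g : Option ι → M) :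
    ∑ o : Option ι, g o = g none + ∑ i, g (some i) := by
  rw [univ_option]
  exact Finset.sum_insertNone g _

lemma per_eps
    {n k : ℕ} {K : Set (EuclideanSpace ℝ (Fin n))}
    (hKcomp : IsCompact K) (hKconv : Convex ℝ K)
    (T : Measure (EuclideanSpace ℝ (Fin n))) [IsProbabilityMeasure T]
    (hTK : T Kᶜ = 0)
    (x : EuclideanSpace ℝ (Fin n)) (hxK : x ∈ K)
    (hbary : ∫ y, y ∂T = x)
    (f : EuclideanSpace ℝ (Fin n) → ℝ)
    (hfc : ContinuousOn f K) (hfconv : ConvexOn ℝ K f)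
    (heq : f x = ∫ y, f y ∂T)
    (p : Fin k → EuclideanSpace ℝ (Fin n)) (hp : ∀ j, p j ∈ measureSupport T)
    {ε : ℝ} (hε : 0 < ε)
    (hdisj : ∀ i j, i ≠ j → Disjoint (ball (p i) ε) (ball (p j) ε)) :
    ∃ z : Fin k → EuclideanSpace ℝ (Fin n),
      (∀ j, z j ∈ K ∧ dist (z j) (p j) ≤ ε) ∧
      ∀ β : Fin k → ℝ, (∀ j, 0 ≤ β j) → ∑ j, β j = 1 →
        f (∑ j, β j • z j) = ∑ j, β j * f (z j) := by
  have hKclosed : IsClosed K := hKcomp.isClosed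
  -- basic integrability
  have hTrestrict : T.restrict K = T :=
    Measure.restrict_eq_self_of_ae_mem (by
      rw [MeasureTheory.ae_iff]
      exact hTK)
  have hfi : Integrable f T := by
    rw [← hTrestrict]
    exact hfc.integrableOn_compact hKcomp
  have hidi : Integrable (fun y => y) T := by
    rw [← hTrestrict]
    exact (continuous_id.continuousOn).integrableOn_compact hKcomp
  -- the partition
  set U : Set (EuclideanSpace ℝ (Fin n)) := ⋃ j, ball (p j) ε with hU
  set A : Option (Fin k) → Set (EuclideanSpace ℝ (Fin n)) :=
    fun o => Option.elim o Uᶜ (fun j => ball (p j) ε) with hA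
  have hAmeas : ∀ o, MeasurableSet (A o) := by
    rintro (_ | j)
    · exact (isOpen_iUnion fun j => isOpen_ball).isClosed_compl.measurableSet
    · exact measurableSet_ball
  have hAdisj : Pairwise (Function.onFun Disjoint A) := by
    rintro (_ | i) (_ | j) hij
    · exact absurd rfl hij
    · exact Set.disjoint_of_subset_right (Set.subset_iUnion (fun j => ball (p j) ε) j)
        disjoint_compl_left
    · exact Set.disjoint_of_subset_left (Set.subset_iUnion (fun j => ball (p j) ε) i)
        disjoint_compl_right
    · exact hdisj i j (by simpa using hij)
  have hAuniv : ⋃ o, A o = Set.univ := by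
    rw [Set.iUnion_option]
    show Uᶜ ∪ ⋃ j, ball (p j) ε = Set.univ
    rw [← hU, Set.compl_union_self]
  -- weights
  set w : Option (Fin k) → ℝ := fun o => (T (A o)).toReal with hw
  have hw0 : ∀ o, 0 ≤ w o := fun o => ENNReal.toReal_nonneg
  have hwsum : ∑ o, w o = 1 := by
    have h1 : ∑ o, T (A o) = 1 := by
      rw [← tsum_fintype (L := SummationFilter.unconditional _), ← measure_iUnion hAdisj hAmeas, hAuniv]
      exact measure_univ
    rw [hw]
    rw [← ENNReal.toReal_sum (fun o _ => measure_ne_top T (A o)), h1, ENNReal.toReal_one]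
  have hwpos : ∀ j, 0 < w (some j) :=
    fun j => ENNReal.toReal_pos
      (hp j (ball (p j) ε) (ball_mem_nhds (p j) hε)).ne' (measure_ne_top T _)
  have hwz0 : ∀ o, w o = 0 → T (A o) = 0 := by
    intro o h
    rw [hw] at h
    exact (ENNReal.toReal_eq_zero_iff _).mp h |>.resolve_right (measure_ne_top T (A o))
  -- barycentres of pieces
  set z : Option (Fin k) → EuclideanSpace ℝ (Fin n) :=
    fun o => if h : 0 < w o then (w o)⁻¹ • ∫ y in A o, y ∂T else x with hz
  have hzavg : ∀ o, 0 < w o → z o = ⨍ y in A o, y ∂T := by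
    intro o h
    simp only [hz]
    rw [dif_pos h, average_eq, Measure.real, Measure.restrict_apply_univ]
  have hzmem : ∀ o (s : Set (EuclideanSpace ℝ (Fin n))), Convex ℝ s → IsClosed s →
      A o ∩ K ⊆ s → 0 < w o → z o ∈ s := by
    intro o s hsconv hsclosed hsub hpos
    have hT0 : T (A o) ≠ 0 := by
      intro h
      simp [hw, h] at hpos
    haveI : NeZero (T.restrict (A o)) := ⟨by rwa [Ne, Measure.restrict_eq_zero]⟩
    rw [hzavg o hpos]
    refine hsconv.average_mem hsclosed ?_ (hidi.restrict)
    have h1 : ∀ᵐ y ∂T.restrict (A o), y ∈ A o := ae_restrict_mem (hAmeas o)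
    have h2 : ∀ᵐ y ∂T.restrict (A o), y ∈ K := by
      rw [MeasureTheory.ae_iff]
      exact le_antisymm ((Measure.restrict_apply_le (A o) Kᶜ).trans hTK.le) zero_le
    filter_upwards [h1, h2] with y hy1 hy2 using hsub ⟨hy1, hy2⟩
  have hzK : ∀ o, z o ∈ K := by
    intro o
    by_cases h : 0 < w o
    · exact hzmem o K hKconv hKclosed Set.inter_subset_right h
    · simp only [hz]; rw [dif_neg h]; exact hxK
  have hzball : ∀ j, z (some j) ∈ closedBall (p j) ε := by
    intro j
    refine (hzmem (some j) (K ∩ closedBall (p j) ε)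
      (hKconv.inter (convex_closedBall _ _)) (hKclosed.inter isClosed_closedBall)
      ?_ (hwpos j)).2
    rintro y ⟨hy1, hy2⟩
    exact ⟨hy2, ball_subset_closedBall hy1⟩
  -- decomposition of x
  have hwz : ∀ o, w o • z o = ∫ y in A o, y ∂T := by
    intro o
    by_cases h : 0 < w o
    · simp only [hz]; rw [dif_pos h, smul_inv_smul₀ h.ne']
    · have h0 : w o = 0 := le_antisymm (not_lt.mp h) (hw0 o)
      rw [h0, zero_smul, Measure.restrict_eq_zero.mpr (hwz0 o h0), integral_zero_measure]
  have hxsum : ∑ o, w o • z o = x := by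
    have h1 := integral_iUnion hAmeas hAdisj (hidi.integrableOn (s := ⋃ o, A o))
    rw [hAuniv, tsum_fintype] at h1
    rw [Measure.restrict_univ] at h1
    calc ∑ o, w o • z o = ∑ o, ∫ y in A o, y ∂T := Finset.sum_congr rfl (fun o _ => hwz o)
    _ = ∫ y, y ∂T := h1.symm
    _ = x := hbary
  have hfsum : ∑ o, ∫ y in A o, f y ∂T = ∫ y, f y ∂T := by
    have h1 := integral_iUnion hAmeas hAdisj (hfi.integrableOn (s := ⋃ o, A o))
    rw [hAuniv, tsum_fintype, Measure.restrict_univ] at h1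
    exact h1.symm
  -- per-piece Jensen
  have hpiece : ∀ o, w o * f (z o) ≤ ∫ y in A o, f y ∂T := by
    intro o
    by_cases h : 0 < w o
    · have hT0 : T (A o) ≠ 0 := by
        intro h0
        simp [hw, h0] at h
      haveI : NeZero (T.restrict (A o)) := ⟨by rwa [Ne, Measure.restrict_eq_zero]⟩
      have h2 : ∀ᵐ y ∂T.restrict (A o), y ∈ K := by
        rw [MeasureTheory.ae_iff]
        exact le_antisymm ((Measure.restrict_apply_le (A o) Kᶜ).trans hTK.le) zero_le
      have hJ := hfconv.map_average_le hfc hKclosed h2 hidi.restrict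
        (by exact hfi.restrict)
      rw [← hzavg o h] at hJ
      have havg : ⨍ y in A o, f y ∂T = (w o)⁻¹ * ∫ y in A o, f y ∂T := by
        rw [average_eq, Measure.real, Measure.restrict_apply_univ]
        rfl
      rw [havg] at hJ
      calc w o * f (z o) ≤ w o * ((w o)⁻¹ * ∫ y in A o, f y ∂T) :=
            mul_le_mul_of_nonneg_left hJ (hw0 o)
      _ = ∫ y in A o, f y ∂T := by field_simp
    · have h0 : w o = 0 := le_antisymm (not_lt.mp h) (hw0 o)
      rw [h0, zero_mul, Measure.restrict_eq_zero.mpr (hwz0 o h0), integral_zero_measure]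
  -- global equality
  have hJ : f (∑ o, w o • z o) ≤ ∑ o, w o * f (z o) :=
    hfconv.map_sum_le (fun o _ => hw0 o) hwsum (fun o _ => hzK o)
  have hup : ∑ o, w o * f (z o) ≤ f x := by
    rw [heq, ← hfsum]
    exact Finset.sum_le_sum (fun o _ => hpiece o)
  have heqz : f (∑ o, w o • z o) = ∑ o, w o * f (z o) := by
    refine le_antisymm hJ ?_
    rw [hxsum]
    exact hup
  -- conclude via key lemma
  refine ⟨fun j => z (some j), fun j => ⟨hzK _, (mem_closedBall.mp (hzball j))⟩, ?_⟩
  intro β hβ0 hβs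
  set β' : Option (Fin k) → ℝ := fun o => Option.elim o 0 (fun j => β j) with hβ'
  have hβ'0 : ∀ o, 0 ≤ β' o := by
    rintro (_ | j)
    · exact le_rfl
    · exact hβ0 j
  have hβ's : ∑ o, β' o = 1 := by
    rw [sum_option' β']
    simpa [hβ'] using hβs
  have hvan : ∀ o, w o = 0 → β' o = 0 := by
    rintro (_ | j) h
    · rfl
    · exact absurd h (hwpos j).ne'
  have hkey := key_affine hfconv hzK hw0 hwsum heqz hβ'0 hβ's hvan
  rw [sum_option' (fun o => β' o • z o), sum_option' (fun o => β' o * f (z o))] at hkey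
  simpa [hβ'] using hkey

lemma sum_enum {α M : Type*} [AddCommMonoid M] (P : Finset α) (g : α → M) :
    ∑ j : Fin (Fintype.card ↥P), g ↑((Fintype.equivFin ↥P).symm j) = ∑ y ∈ P, g y := by
  rw [← Finset.sum_coe_sort P g]
  exact Equiv.sum_comp (Fintype.equivFin ↥P).symm (fun y : ↥P => g ↑y)


theorem jensen_equality_case
    {n : ℕ} (K : Set (EuclideanSpace ℝ (Fin n)))
    (hKcomp : IsCompact K) (hKconv : Convex ℝ K)
    (T : Measure (EuclideanSpace ℝ (Fin n))) [IsProbabilityMeasure T]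
    (hTK : T Kᶜ = 0)
    (x : EuclideanSpace ℝ (Fin n)) (hxK : x ∈ K)
    (hbary : ∫ y, y ∂T = x)
    (f : EuclideanSpace ℝ (Fin n) → ℝ)
    (hfc : ContinuousOn f K) (hfconv : ConvexOn ℝ K f)
    (heq : f x = ∫ y, f y ∂T) :
    ∀ a ∈ convexHull ℝ (measureSupport T), ∀ b ∈ convexHull ℝ (measureSupport T),
      ∀ t : ℝ, 0 ≤ t → t ≤ 1 →
        f (t • a + (1 - t) • b) = t * f a + (1 - t) * f b := by
  classical
  intro a ha b hb t ht0 ht1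
  have hKclosed : IsClosed K := hKcomp.isClosed
  have hSK : measureSupport T ⊆ K := by
    intro y hy
    by_contra hyK
    have h1 : 0 < T Kᶜ := hy Kᶜ (hKclosed.isOpen_compl.mem_nhds hyK)
    rw [hTK] at h1
    exact lt_irrefl 0 h1
  have hCK : convexHull ℝ (measureSupport T) ⊆ K := convexHull_min hSK hKconv
  have haK : a ∈ K := hCK ha
  have hbK : b ∈ K := hCK hb
  have ht1' : 0 ≤ 1 - t := by linarith
  have hcK : t • a + (1 - t) • b ∈ K := hKconv haK hbK ht0 ht1' (by ring)
  -- finite representations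
  have hrep : ∀ c ∈ convexHull ℝ (measureSupport T),
      ∃ Q : Finset (EuclideanSpace ℝ (Fin n)), ↑Q ⊆ measureSupport T ∧
        c ∈ convexHull ℝ (↑Q : Set (EuclideanSpace ℝ (Fin n))) := by
    intro c hc
    rw [convexHull_eq_union] at hc
    simp only [Set.mem_iUnion] at hc
    obtain ⟨Q, hQ, -, hcQ⟩ := hc
    exact ⟨Q, hQ, hcQ⟩
  obtain ⟨Pa, hPaS, haPa⟩ := hrep a ha
  obtain ⟨Pb, hPbS, hbPb⟩ := hrep b hb
  set P : Finset (EuclideanSpace ℝ (Fin n)) := Pa ∪ Pb with hP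
  have hPS : ↑P ⊆ measureSupport T := by
    rw [hP, Finset.coe_union]
    exact Set.union_subset hPaS hPbS
  have haP : a ∈ convexHull ℝ (↑P : Set (EuclideanSpace ℝ (Fin n))) :=
    convexHull_mono (Finset.coe_subset.2 Finset.subset_union_left) haPa
  have hbP : b ∈ convexHull ℝ (↑P : Set (EuclideanSpace ℝ (Fin n))) :=
    convexHull_mono (Finset.coe_subset.2 Finset.subset_union_right) hbPb
  rw [Finset.convexHull_eq] at haP hbP
  obtain ⟨β, hβ0, hβs, hβa⟩ := haP
  obtain ⟨γ, hγ0, hγs, hγb⟩ := hbP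
  rw [P.centerMass_eq_of_sum_1 id hβs] at hβa
  rw [P.centerMass_eq_of_sum_1 id hγs] at hγb
  -- enumeration of P
  set k : ℕ := Fintype.card ↥P with hk
  set p : Fin k → EuclideanSpace ℝ (Fin n) := fun j => ↑((Fintype.equivFin ↥P).symm j) with hpdef
  have hpinj : Function.Injective p := fun i j h =>
    (Fintype.equivFin ↥P).symm.injective (Subtype.coe_injective h)
  have hpP : ∀ j, p j ∈ P := fun j => ((Fintype.equivFin ↥P).symm j).2
  have hpS : ∀ j, p j ∈ measureSupport T := fun j => hPS (hpP j)
  set βp : Fin k → ℝ := fun j => β (p j) with hβp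
  set γp : Fin k → ℝ := fun j => γ (p j) with hγp
  have hβps : ∑ j, βp j = 1 := by rw [hβp]; rw [sum_enum P β]; exact hβs
  have hγps : ∑ j, γp j = 1 := by rw [hγp]; rw [sum_enum P γ]; exact hγs
  have hβp0 : ∀ j, 0 ≤ βp j := fun j => hβ0 _ (hpP j)
  have hγp0 : ∀ j, 0 ≤ γp j := fun j => hγ0 _ (hpP j)
  have hasum : ∑ j, βp j • p j = a := by
    rw [← hβa]
    exact sum_enum P (fun y => β y • y)
  have hbsum : ∑ j, γp j • p j = b := by
    rw [← hγb]
    exact sum_enum P (fun y => γ y • y)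
  -- separation radius
  obtain ⟨δ, hδ0, hδ2⟩ : ∃ δ : ℝ, 0 < δ ∧ ∀ i j : Fin k, i ≠ j →
      2 * δ ≤ dist (p i) (p j) := by
    rcases isEmpty_or_nonempty (Fin k) with hk0 | hk1
    · exact ⟨1, one_pos, fun i j _ => (IsEmpty.false i).elim⟩
    · haveI : Nonempty (Fin k × Fin k) := ⟨(hk1.some, hk1.some)⟩
      have hne : (Finset.univ : Finset (Fin k × Fin k)).Nonempty := Finset.univ_nonempty
      set g : Fin k × Fin k → ℝ :=
        fun q => if q.1 = q.2 then 1 else dist (p q.1) (p q.2) with hg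
      have hgpos : ∀ q, 0 < g q := by
        intro q
        simp only [hg]
        split_ifs with h
        · norm_num
        · exact dist_pos.mpr (fun hc => h (hpinj hc))
      have hinfpos : 0 < Finset.univ.inf' hne g := by
        rw [Finset.lt_inf'_iff]
        exact fun q _ => hgpos q
      refine ⟨Finset.univ.inf' hne g / 2, by linarith, ?_⟩
      intro i j hij
      have h1 : Finset.univ.inf' hne g ≤ g (i, j) :=
        Finset.inf'_le _ (Finset.mem_univ _)
      have h2 : g (i, j) = dist (p i) (p j) := by
        simp only [hg]
        rw [if_neg hij]
      linarith [h2 ▸ h1]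
  -- the approximation estimate
  have hkey : ∀ η : ℝ, 0 < η →
      |f (t • a + (1 - t) • b) - (t * f a + (1 - t) * f b)| ≤ 2 * η := by
    intro η hη
    obtain ⟨da, hda0, hda⟩ := Metric.continuousWithinAt_iff.mp (hfc a haK) η hη
    obtain ⟨db, hdb0, hdb⟩ := Metric.continuousWithinAt_iff.mp (hfc b hbK) η hη
    obtain ⟨dc, hdc0, hdc⟩ :=
      Metric.continuousWithinAt_iff.mp (hfc _ hcK) η hη
    set ε : ℝ := min δ (min (min da db) dc / 2) with hεdef
    have hmin0 : 0 < min (min da db) dc := lt_min (lt_min hda0 hdb0) hdc0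
    have hε0 : 0 < ε := lt_min hδ0 (by linarith)
    have hεδ : ε ≤ δ := min_le_left _ _
    have hεlt : ∀ d, min (min da db) dc ≤ d → ε < d := by
      intro d hd
      calc ε ≤ min (min da db) dc / 2 := min_le_right _ _
      _ < min (min da db) dc := by linarith
      _ ≤ d := hd
    have hεa : ε < da := hεlt da ((min_le_left _ _).trans (min_le_left _ _))
    have hεb : ε < db := hεlt db ((min_le_left _ _).trans (min_le_right _ _))
    have hεc : ε < dc := hεlt dc (min_le_right _ _)
    have hdisj : ∀ i j : Fin k, i ≠ j →
        Disjoint (Metric.ball (p i) ε) (Metric.ball (p j) ε) := by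
      intro i j hij
      exact Metric.ball_disjoint_ball (by linarith [hδ2 i j hij])
    obtain ⟨z, hzprop, haff⟩ := per_eps hKcomp hKconv T hTK x hxK hbary f hfc hfconv heq
      p hpS hε0 hdisj
    have hzK : ∀ j, z j ∈ K := fun j => (hzprop j).1
    have hzd : ∀ j, dist (z j) (p j) ≤ ε := fun j => (hzprop j).2
    -- the three combinations
    set ζ : Fin k → ℝ := fun j => t * βp j + (1 - t) * γp j with hζ
    have hζ0 : ∀ j, 0 ≤ ζ j := fun j =>
      add_nonneg (mul_nonneg ht0 (hβp0 j)) (mul_nonneg ht1' (hγp0 j))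
    have hζs : ∑ j, ζ j = 1 := by
      rw [hζ]
      rw [Finset.sum_add_distrib, ← Finset.mul_sum, ← Finset.mul_sum, hβps, hγps]
      ring
    set aε : EuclideanSpace ℝ (Fin n) := ∑ j, βp j • z j with haε
    set bε : EuclideanSpace ℝ (Fin n) := ∑ j, γp j • z j with hbε
    have hFa : f aε = ∑ j, βp j * f (z j) := haff βp hβp0 hβps
    have hFb : f bε = ∑ j, γp j * f (z j) := haff γp hγp0 hγps
    have hFc : f (∑ j, ζ j • z j) = ∑ j, ζ j * f (z j) := haff ζ hζ0 hζs
    have hcomb : ∑ j, ζ j • z j = t • aε + (1 - t) • bε := by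
      rw [haε, hbε, Finset.smul_sum, Finset.smul_sum, ← Finset.sum_add_distrib]
      refine Finset.sum_congr rfl fun j _ => ?_
      rw [hζ]
      rw [smul_smul, smul_smul, add_smul]
    have hfcε : f (t • aε + (1 - t) • bε) = t * f aε + (1 - t) * f bε := by
      rw [← hcomb, hFc, hFa, hFb, hζ]
      rw [Finset.mul_sum, Finset.mul_sum, ← Finset.sum_add_distrib]
      refine Finset.sum_congr rfl fun j _ => ?_
      ring
    -- memberships
    have haεK : aε ∈ K := hKconv.sum_mem (fun j _ => hβp0 j) hβps (fun j _ => hzK j)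
    have hbεK : bε ∈ K := hKconv.sum_mem (fun j _ => hγp0 j) hγps (fun j _ => hzK j)
    have hcεK : t • aε + (1 - t) • bε ∈ K := hKconv haεK hbεK ht0 ht1' (by ring)
    -- distance estimates
    have hdistsum : ∀ (w : Fin k → ℝ), (∀ j, 0 ≤ w j) → ∑ j, w j = 1 →
        dist (∑ j, w j • z j) (∑ j, w j • p j) ≤ ε := by
      intro w hw0 hws
      rw [dist_eq_norm, ← Finset.sum_sub_distrib]
      calc ‖∑ j, (w j • z j - w j • p j)‖ ≤ ∑ j, ‖w j • z j - w j • p j‖ :=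
            norm_sum_le _ _
      _ = ∑ j, w j * ‖z j - p j‖ := by
          refine Finset.sum_congr rfl fun j _ => ?_
          rw [← smul_sub, norm_smul, Real.norm_eq_abs, abs_of_nonneg (hw0 j)]
      _ ≤ ∑ j, w j * ε := by
          refine Finset.sum_le_sum fun j _ => ?_
          have : ‖z j - p j‖ ≤ ε := by rw [← dist_eq_norm]; exact hzd j
          exact mul_le_mul_of_nonneg_left this (hw0 j)
      _ = ε := by rw [← Finset.sum_mul, hws, one_mul]
    have hda' : dist aε a ≤ ε := by
      rw [← hasum]; exact hdistsum βp hβp0 hβps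
    have hdb' : dist bε b ≤ ε := by
      rw [← hbsum]; exact hdistsum γp hγp0 hγps
    have hdc' : dist (t • aε + (1 - t) • bε) (t • a + (1 - t) • b) ≤ ε := by
      calc dist (t • aε + (1 - t) • bε) (t • a + (1 - t) • b)
          ≤ dist (t • aε) (t • a) + dist ((1 - t) • bε) ((1 - t) • b) :=
            dist_add_add_le _ _ _ _
      _ = t * dist aε a + (1 - t) * dist bε b := by
          rw [dist_smul₀, dist_smul₀, Real.norm_eq_abs, Real.norm_eq_abs,
            abs_of_nonneg ht0, abs_of_nonneg ht1']
      _ ≤ t * ε + (1 - t) * ε := add_le_add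
            (mul_le_mul_of_nonneg_left hda' ht0) (mul_le_mul_of_nonneg_left hdb' ht1')
      _ = ε := by ring
    -- continuity estimates
    have ea : dist (f aε) (f a) < η := hda haεK (lt_of_le_of_lt hda' hεa)
    have eb : dist (f bε) (f b) < η := hdb hbεK (lt_of_le_of_lt hdb' hεb)
    have ec : dist (f (t • aε + (1 - t) • bε)) (f (t • a + (1 - t) • b)) < η :=
      hdc hcεK (lt_of_le_of_lt hdc' hεc)
    rw [Real.dist_eq] at ea eb ec
    have hXeq : f (t • a + (1 - t) • b) - (t * f a + (1 - t) * f b) =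
        -(f (t • aε + (1 - t) • bε) - f (t • a + (1 - t) • b))
          + (t * (f aε - f a) + (1 - t) * (f bε - f b)) := by
      rw [hfcε]; ring
    rw [hXeq]
    have h2 : |t * (f aε - f a)| ≤ t * η := by
      rw [abs_mul, abs_of_nonneg ht0]
      exact mul_le_mul_of_nonneg_left ea.le ht0
    have h3 : |(1 - t) * (f bε - f b)| ≤ (1 - t) * η := by
      rw [abs_mul, abs_of_nonneg ht1']
      exact mul_le_mul_of_nonneg_left eb.le ht1'
    calc |(-(f (t • aε + (1 - t) • bε) - f (t • a + (1 - t) • b)))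
          + (t * (f aε - f a) + (1 - t) * (f bε - f b))|
        ≤ |(-(f (t • aε + (1 - t) • bε) - f (t • a + (1 - t) • b)))|
          + |t * (f aε - f a) + (1 - t) * (f bε - f b)| := abs_add_le _ _
    _ ≤ |(-(f (t • aε + (1 - t) • bε) - f (t • a + (1 - t) • b)))|
          + (|t * (f aε - f a)| + |(1 - t) * (f bε - f b)|) := by
          linarith [abs_add_le (t * (f aε - f a)) ((1 - t) * (f bε - f b))]
    _ ≤ η + (t * η + (1 - t) * η) := by
          rw [abs_neg]
          exact add_le_add ec.le (by linarith)
    _ = 2 * η := by ring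
  -- conclude
  have habs : |f (t • a + (1 - t) • b) - (t * f a + (1 - t) * f b)| = 0 := by
    by_contra h
    have hpos : 0 < |f (t • a + (1 - t) • b) - (t * f a + (1 - t) * f b)| :=
      lt_of_le_of_ne (abs_nonneg _) (Ne.symm h)
    have := hkey (|f (t • a + (1 - t) • b) - (t * f a + (1 - t) * f b)| / 4) (by linarith)
    linarith
  have := abs_eq_zero.mp habs
  linarith [sub_eq_zero.mp this]
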